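/- Let L be a locally compact Hausdorff topological group with left Haar measure μ, M a compact open subgroup with μ(M) = 1, V a finite-dimensional complex inner product space, σ : M → B(V) a continuous homomorphism into the unitary operators on V, and p : L → B(V) given by p(x) = σ(x) for x ∈ M, p(x) = 0 otherwise. Then for every continuous compactly supported f : L → B(V), the following are equivalent: (a) for every z ∈ L, ∫_L ∫_L p(y) ∘ f(w) ∘ p(w⁻¹y⁻¹z) dμ(w) dμ(y) = f(z) (i.e. p ⋆ f ⋆ p = f); (b) f(mxn) = σ(m) ∘ f(x) ∘ σ(n) for all m, n ∈ M, x ∈ L. -/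

import Mathlib

open MeasureTheory

/-- Conjugation `x ↦ a * x * b` by units, as a continuous linear equivalence. -/
noncomputable def conjCLE {R : Type*} [NormedRing R] [NormedAlgebra ℂ R] (a b : Rˣ) :
    R ≃L[ℂ] R where
  toFun x := (a : R) * x * (b : R)
  invFun x := ((a⁻¹ : Rˣ) : R) * x * ((b⁻¹ : Rˣ) : R)
  map_add' x y := by noncomm_ring
  map_smul' c x := by simp [mul_smul_comm, smul_mul_assoc]
  left_inv x := by
    simp [mul_assoc, Units.inv_mul_cancel_left, Units.mul_inv_cancel_left,
      ← mul_assoc, Units.mul_inv_cancel_right, Units.inv_mul_cancel_right]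
  right_inv x := by
    simp [mul_assoc, Units.inv_mul_cancel_left, Units.mul_inv_cancel_left,
      ← mul_assoc, Units.mul_inv_cancel_right, Units.inv_mul_cancel_right]
  continuous_toFun := by
    exact ((continuous_const.mul continuous_id).mul continuous_const)
  continuous_invFun := by
    exact ((continuous_const.mul continuous_id).mul continuous_const)

@[simp] lemma conjCLE_apply {R : Type*} [NormedRing R] [NormedAlgebra ℂ R] (a b : Rˣ) (x : R) :
    conjCLE a b x = (a : R) * x * (b : R) := rfl

/-- With `L`, `M`, `σ`, `μ`, `p` as in Statement 5, for every continuous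
compactly supported `f : L → B(V)` the following are equivalent: (a) `p ⋆ f ⋆ p = f`, i.e.
`∫∫ p(y) ∘ f(w) ∘ p(w⁻¹ y⁻¹ z) dμ(w) dμ(y) = f z` for all `z`; (b) `f` is
bi-`(M,σ)`-equivariant: `f (m x n) = σ m ∘ f x ∘ σ n`. -/
theorem stmt_6 {L : Type*} [Group L] [TopologicalSpace L] [IsTopologicalGroup L]
    [LocallyCompactSpace L] [T2Space L] [MeasurableSpace L] [BorelSpace L]
    {V : Type*} [NormedAddCommGroup V] [InnerProductSpace ℂ V] [FiniteDimensional ℂ V]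
    (μ : Measure L) [μ.IsHaarMeasure]
    (M : Subgroup L) (hMc : IsCompact (M : Set L)) (hMo : IsOpen (M : Set L))
    (hμM : μ (M : Set L) = 1)
    (σ : M →* (V →L[ℂ] V)) (hσc : Continuous σ) (hσu : ∀ m : M, σ m ∈ unitary (V →L[ℂ] V))
    (p : L → (V →L[ℂ] V))
    (hp : ∀ y : L, (∀ h : y ∈ M, p y = σ ⟨y, h⟩) ∧ (y ∉ M → p y = 0))
    (f : L → (V →L[ℂ] V)) (hfc : Continuous f) (hfs : HasCompactSupport f) :
    (∀ z : L, ∫ y, ∫ w, p y * f w * p (w⁻¹ * (y⁻¹ * z)) ∂μ ∂μ = f z) ↔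
    (∀ (m n : M) (x : L), f ((m : L) * x * (n : L)) = σ m * f x * σ n) := by
  -- basic facts about `p`
  have hpm : ∀ (m : M) (y : L), p ((m : L) * y) = σ m * p y := by
    intro m y
    by_cases hy : y ∈ M
    · have h1 : (m : L) * y ∈ M := mul_mem m.2 hy
      rw [(hp _).1 h1, (hp y).1 hy]
      have : (⟨(m : L) * y, h1⟩ : M) = m * ⟨y, hy⟩ := rfl
      rw [this, map_mul]
    · have h1 : (m : L) * y ∉ M := by
        intro h
        exact hy (by simpa [inv_mul_cancel_left] using mul_mem (inv_mem m.2) h)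
      rw [(hp _).2 h1, (hp y).2 hy, mul_zero]
  have hpn : ∀ (n : M) (y : L), p (y * (n : L)) = p y * σ n := by
    intro n y
    by_cases hy : y ∈ M
    · have h1 : y * (n : L) ∈ M := mul_mem hy n.2
      rw [(hp _).1 h1, (hp y).1 hy]
      have : (⟨y * (n : L), h1⟩ : M) = (⟨y, hy⟩ : M) * n := rfl
      rw [this, map_mul]
    · have h1 : y * (n : L) ∉ M := by
        intro h
        exact hy (by simpa [mul_inv_cancel_right] using mul_mem h (inv_mem n.2))
      rw [(hp _).2 h1, (hp y).2 hy, zero_mul]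
  constructor
  · -- (a) → (b)
    intro h m n x
    have key := h ((m : L) * x * (n : L))
    rw [← key, ← h x]
    set T : (V →L[ℂ] V) ≃L[ℂ] (V →L[ℂ] V) := conjCLE (σ.toHomUnits m) (σ.toHomUnits n) with hT
    have hTap : ∀ z : (V →L[ℂ] V), T z = σ m * z * σ n := fun z => rfl
    calc
      ∫ y, ∫ w, p y * f w * p (w⁻¹ * (y⁻¹ * ((m : L) * x * (n : L)))) ∂μ ∂μ
          = ∫ y, ∫ w, p ((m : L) * y) * f w *
              p (w⁻¹ * (((m : L) * y)⁻¹ * ((m : L) * x * (n : L)))) ∂μ ∂μ :=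
        (integral_mul_left_eq_self
          (fun y => ∫ w, p y * f w * p (w⁻¹ * (y⁻¹ * ((m : L) * x * (n : L)))) ∂μ)
          ((m : L))).symm
      _ = ∫ y, T (∫ w, p y * f w * p (w⁻¹ * (y⁻¹ * x)) ∂μ) ∂μ := by
        refine integral_congr_ae (Filter.Eventually.of_forall fun y => ?_)
        dsimp only
        rw [← T.integral_comp_comm]
        refine integral_congr_ae (Filter.Eventually.of_forall fun w => ?_)
        dsimp only
        have e1 : w⁻¹ * (((m : L) * y)⁻¹ * ((m : L) * x * (n : L)))
            = (w⁻¹ * (y⁻¹ * x)) * (n : L) := by group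
        rw [e1, hpn, hpm, hTap]
        noncomm_ring
      _ = T (∫ y, ∫ w, p y * f w * p (w⁻¹ * (y⁻¹ * x)) ∂μ ∂μ) :=
        T.integral_comp_comm _
      _ = σ m * (∫ y, ∫ w, p y * f w * p (w⁻¹ * (y⁻¹ * x)) ∂μ ∂μ) * σ n := hTap _
  · -- (b) → (a)
    intro hb z
    have houter : (fun y => ∫ w, p y * f w * p (w⁻¹ * (y⁻¹ * z)) ∂μ)
        = Set.indicator (M : Set L) (fun _ => f z) := by
      funext y
      by_cases hy : y ∈ M
      · rw [Set.indicator_of_mem hy]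
        set S : Set L := {w : L | w⁻¹ * (y⁻¹ * z) ∈ M} with hS
        have hSpre : S = (fun w => (y⁻¹ * z)⁻¹ * w) ⁻¹' (M : Set L) := by
          ext w
          simp only [hS, Set.mem_setOf_eq, Set.mem_preimage, SetLike.mem_coe]
          constructor
          · intro hw
            simpa [mul_inv_rev] using inv_mem hw
          · intro hw
            simpa [mul_inv_rev] using inv_mem hw
        have hSmeas : MeasurableSet S := by
          rw [hSpre]
          exact hMo.measurableSet.preimage (measurable_const_mul _)
        have hSmeasure : μ S = 1 := by
          rw [hSpre, measure_preimage_mul μ _ _, hμM]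
        have hint : (fun w => p y * f w * p (w⁻¹ * (y⁻¹ * z)))
            = Set.indicator S (fun _ => f z) := by
          funext w
          by_cases hw : w⁻¹ * (y⁻¹ * z) ∈ M
          · rw [Set.indicator_of_mem (show w ∈ S from hw), (hp y).1 hy, (hp _).1 hw,
              ← hb ⟨y, hy⟩ ⟨w⁻¹ * (y⁻¹ * z), hw⟩ w]
            congr 1
            group
          · rw [Set.indicator_of_notMem (show w ∉ S from hw), (hp _).2 hw, mul_zero]
        rw [hint, integral_indicator_const _ hSmeas, measureReal_def, hSmeasure, ENNReal.toReal_one, one_smul]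
      · rw [Set.indicator_of_notMem hy]
        have : (fun w => p y * f w * p (w⁻¹ * (y⁻¹ * z))) = fun _ => (0 : V →L[ℂ] V) := by
          funext w
          rw [(hp y).2 hy, zero_mul, zero_mul]
        rw [this, integral_const, smul_zero]
    rw [houter, integral_indicator_const _ hMo.measurableSet, measureReal_def, hμM, ENNReal.toReal_one, one_smul]
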